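/- Suppose f̃(s) = 1 - μ s^β + o(s^β) as s → 0+ with μ > 0 and 0 < β ≤ 1. Under the scaling q = μ τ^β, the Laplace transform of the rescaled thinned density, g̃_{q,τ}(s) = q f̃(τs)/(1 - (1-q) f̃(τs)), converges pointwise for each fixed s > 0 to 1/(1+s^β) as τ → 0+. -/

import Mathlib

open MeasureTheory Filter

noncomputable def laplace (f : ℝ → ℝ) (s : ℝ) : ℝ :=
  ∫ t in Set.Ioi (0:ℝ), Real.exp (-s * t) * f t

/-- Under the scaling `q = μ τ^β`, the Laplace transform of the rescaled thinned density
converges, as `τ → 0+`, to `1/(1+s^β)` for each fixed `s > 0`. -/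
theorem thinning_limit_mittagLeffler (f : ℝ → ℝ)
    (hf_nonneg : ∀ t, 0 ≤ t → 0 ≤ f t)
    (hf_int : IntegrableOn f (Set.Ioi 0))
    (hf_density : ∫ t in Set.Ioi (0:ℝ), f t = 1)
    (μ β : ℝ) (hμ : 0 < μ) (hβ0 : 0 < β) (hβ1 : β ≤ 1)
    (hasymp : Tendsto (fun s : ℝ => (laplace f s - (1 - μ * s ^ β)) / s ^ β)
      (nhdsWithin 0 (Set.Ioi 0)) (nhds 0))
    (s : ℝ) (hs : 0 < s) :
    Tendsto (fun τ : ℝ =>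
        (μ * τ ^ β) * laplace f (τ * s)
          / (1 - (1 - μ * τ ^ β) * laplace f (τ * s)))
      (nhdsWithin 0 (Set.Ioi 0)) (nhds (1 / (1 + s ^ β))) := by
  have hsβ : (0:ℝ) < s ^ β := Real.rpow_pos_of_pos hs β
  set L : ℝ → ℝ := fun τ => laplace f (τ * s) with hLdef
  set H : ℝ → ℝ := fun τ => (L τ - (1 - μ * (τ * s) ^ β)) / (τ * s) ^ β with hHdef
  -- the map τ ↦ τ * s tends to 0 within Ioi 0
  have hmap : Tendsto (fun τ : ℝ => τ * s) (nhdsWithin 0 (Set.Ioi 0))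
      (nhdsWithin 0 (Set.Ioi 0)) := by
    apply tendsto_nhdsWithin_of_tendsto_nhds_of_eventually_within
    · have : Tendsto (fun τ : ℝ => τ * s) (nhds 0) (nhds (0 * s)) :=
        tendsto_id.mul_const s
      simpa using this.mono_left nhdsWithin_le_nhds
    · filter_upwards [self_mem_nhdsWithin] with τ hτ
      exact mul_pos hτ hs
  have hH : Tendsto H (nhdsWithin 0 (Set.Ioi 0)) (nhds 0) := hasymp.comp hmap
  -- (τ*s)^β → 0
  have hpow : Tendsto (fun τ : ℝ => (τ * s) ^ β) (nhdsWithin 0 (Set.Ioi 0)) (nhds 0) := by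
    have hc : ContinuousAt (fun x : ℝ => x ^ β) 0 :=
      Real.continuousAt_rpow_const 0 β (Or.inr hβ0.le)
    have := hc.tendsto.comp (hmap.mono_right nhdsWithin_le_nhds)
    simpa [Function.comp_def, Real.zero_rpow hβ0.ne'] using this
  -- key pointwise identity for L on Ioi 0
  have hLeq : ∀ τ : ℝ, 0 < τ →
      L τ = (1 - μ * (τ * s) ^ β) + (τ * s) ^ β * H τ := by
    intro τ hτ
    have hne : (τ * s) ^ β ≠ 0 := (Real.rpow_pos_of_pos (mul_pos hτ hs) β).ne'
    simp only [hHdef]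
    field_simp
    ring
  -- L → 1
  have hLlim : Tendsto L (nhdsWithin 0 (Set.Ioi 0)) (nhds 1) := by
    have h1 : Tendsto (fun τ => (1 - μ * (τ * s) ^ β) + (τ * s) ^ β * H τ)
        (nhdsWithin 0 (Set.Ioi 0)) (nhds 1) := by
      have h0 : Tendsto (fun _ : ℝ => (1:ℝ)) (nhdsWithin (0:ℝ) (Set.Ioi 0)) (nhds 1) :=
        tendsto_const_nhds
      have := (h0.sub (hpow.const_mul μ)).add (hpow.mul hH)
      simpa using this
    refine h1.congr' ?_
    filter_upwards [self_mem_nhdsWithin] with τ hτ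
    exact (hLeq τ hτ).symm
  -- denominator function
  set D : ℝ → ℝ := fun τ => (1 - L τ) / (μ * τ ^ β) + L τ with hDdef
  have hDlim : Tendsto D (nhdsWithin 0 (Set.Ioi 0)) (nhds (1 + s ^ β)) := by
    have h2 : Tendsto (fun τ => s ^ β * (μ - H τ) / μ + L τ)
        (nhdsWithin 0 (Set.Ioi 0)) (nhds (1 + s ^ β)) := by
      have hμ0 : Tendsto (fun _ : ℝ => μ) (nhdsWithin (0:ℝ) (Set.Ioi 0)) (nhds μ) :=
        tendsto_const_nhds
      have := (((hμ0.sub hH).const_mul (s ^ β)).div_const μ).add hLlim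
      have heq : s ^ β * (μ - 0) / μ + 1 = 1 + s ^ β := by
        rw [sub_zero, mul_div_assoc, div_self hμ.ne', mul_one, add_comm]
      rwa [heq] at this
    refine h2.congr' ?_
    filter_upwards [self_mem_nhdsWithin] with τ hτ
    have hτβ : (0:ℝ) < τ ^ β := Real.rpow_pos_of_pos hτ β
    have hmul : (τ * s) ^ β = τ ^ β * s ^ β := Real.mul_rpow hτ.le hs.le
    have hL' := hLeq τ hτ
    simp only [hDdef]
    rw [hL', hmul]
    field_simp
    ring
  have hne : (1 : ℝ) + s ^ β ≠ 0 := by positivity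
  have hfinal : Tendsto (fun τ => L τ / D τ) (nhdsWithin 0 (Set.Ioi 0))
      (nhds (1 / (1 + s ^ β))) := hLlim.div hDlim hne
  refine hfinal.congr' ?_
  filter_upwards [self_mem_nhdsWithin] with τ hτ
  have hτβ : (0:ℝ) < τ ^ β := Real.rpow_pos_of_pos hτ β
  have hq : μ * τ ^ β ≠ 0 := (mul_pos hμ hτβ).ne'
  have hDeq : D τ = (1 - (1 - μ * τ ^ β) * L τ) / (μ * τ ^ β) := by
    simp only [hDdef]
    field_simp
    ring
  rw [hDeq, div_div_eq_mul_div, mul_comm]
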